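/- For f : ℝ × ℝ → ℝ, define the Lorentzian metric g_f on ℝ³ (coordinates (x,y,z)) as the map assigning to each point p = (x,y,z) the symmetric bilinear form on ℝ³ given by g_f(p)(u,v) = −2·f(x,y)·u₁v₁ + u₂v₂ + u₁v₃ + u₃v₁. Let h : ℝ → ℝ and v : ℝ → ℝ be functions, set f(x,y) = h(y) + v(x), let w : ℝ → ℝ be differentiable with w' = v, and define T : ℝ³ → ℝ³ by T(x,y,z) = (x, y, z + w(x)). Then T pulls g_f back to the Walker metric of h: for every p ∈ ℝ³ and all u₀, v₀ ∈ ℝ³, g_f(T(p))(DT_p u₀, DT_p v₀) = g_{h̃}(p)(u₀, v₀), where h̃(x,y) = h(y) and DT_p is the Fréchet derivative of T at p. -/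

import Mathlib

/-- The Walker Lorentzian metric on `ℝ³` determined by `f`:
`g_f(p)(u,v) = -2 f(x,y) u₁v₁ + u₂v₂ + u₁v₃ + u₃v₁` at `p = (x,y,z)`. -/
def gWalker (f : ℝ × ℝ → ℝ) (p : ℝ × ℝ × ℝ) (u v : ℝ × ℝ × ℝ) : ℝ :=
  -2 * f (p.1, p.2.1) * u.1 * v.1 + u.2.1 * v.2.1 + u.1 * v.2.2 + u.2.2 * v.1

theorem stmt4 (h v : ℝ → ℝ) (f : ℝ × ℝ → ℝ)
    (hf : ∀ q : ℝ × ℝ, f q = h q.2 + v q.1)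
    (w : ℝ → ℝ) (hw : ∀ x, HasDerivAt w (v x) x)
    (T : ℝ × ℝ × ℝ → ℝ × ℝ × ℝ)
    (hT : ∀ p : ℝ × ℝ × ℝ, T p = (p.1, p.2.1, p.2.2 + w p.1))
    (htil : ℝ × ℝ → ℝ) (hhtil : ∀ q : ℝ × ℝ, htil q = h q.2) :
    ∀ (p u₀ v₀ : ℝ × ℝ × ℝ),
      gWalker f (T p) (fderiv ℝ T p u₀) (fderiv ℝ T p v₀) = gWalker htil p u₀ v₀ := by
  have hTfun : T = fun p : ℝ × ℝ × ℝ => (p.1, p.2.1, p.2.2 + w p.1) := funext hT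
  subst hTfun
  intro p u₀ v₀
  set c := v p.1 with hc
  have hd3 : HasFDerivAt (fun q : ℝ × ℝ × ℝ => q.2.2 + w q.1)
      ((ContinuousLinearMap.snd ℝ ℝ ℝ).comp (ContinuousLinearMap.snd ℝ ℝ (ℝ × ℝ)) +
       ((ContinuousLinearMap.smulRight (1 : ℝ →L[ℝ] ℝ) c).comp
          (ContinuousLinearMap.fst ℝ ℝ (ℝ × ℝ)))) p := by
    exact ((hasFDerivAt_snd.comp p hasFDerivAt_snd)).add
      (((hw p.1).hasFDerivAt).comp p hasFDerivAt_fst)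
  have hL : HasFDerivAt (fun q : ℝ × ℝ × ℝ => (q.1, q.2.1, q.2.2 + w q.1))
      ((ContinuousLinearMap.fst ℝ ℝ (ℝ × ℝ)).prod
        (((ContinuousLinearMap.fst ℝ ℝ ℝ).comp (ContinuousLinearMap.snd ℝ ℝ (ℝ × ℝ))).prod
          ((ContinuousLinearMap.snd ℝ ℝ ℝ).comp (ContinuousLinearMap.snd ℝ ℝ (ℝ × ℝ)) +
           ((ContinuousLinearMap.smulRight (1 : ℝ →L[ℝ] ℝ) c).comp
              (ContinuousLinearMap.fst ℝ ℝ (ℝ × ℝ)))))) p :=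
    HasFDerivAt.prodMk hasFDerivAt_fst (HasFDerivAt.prodMk (hasFDerivAt_fst.comp p hasFDerivAt_snd) hd3)
  rw [hL.fderiv]
  simp [gWalker, hf, hhtil, ContinuousLinearMap.prod_apply]
  ring
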